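/- Let β ∈ (0, 1/2) with β ≠ 1/3, set c = cos(2πβ), let n ∈ ℕ, and let ω ∈ Ĩⁿ(β) with ω ≠ ωₙ*. Set u₀ = 1 + r_β(ω)·√(2 + 2c), v₀ = 3·cos(ωL), v₀' = (ω/sin(ωL))·(u₀ − v₀·cos(ωL)). Then the set {t ∈ [0, L) : v₀·ω·sin(ω(L − t)) + (v₀'/2)·cos(ω(L − t)) = 0} ∪ {t ∈ [L, 2L) : −v₀·cos(ω(2L − t)) + u₀·cos(ω(t − L)) = 0}, i.e. the set of zeros in [0, 2L) of the piecewise derivative of the characteristic function φ (with φ(s) = v₀·cos(ω(L − s)) − (v₀'/(2ω))·sin(ω(L − s)) on [0, L] and φ(s) = (1/sin(ωL))·(v₀·sin(ω(2L − s)) + u₀·sin(ω(s − L))) on [L, 2L]), has exactly 2n+1 elements. (These 2n+1 points are exactly the cut positions t for which λ = ω² is a Neumann edge-state eigenvalue of the zigzag-truncated hexagonal graph.) -/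

import Mathlib

open Real

/-- The edge length `L = 1/√3`. -/
noncomputable def L : ℝ := 1 / Real.sqrt 3

/-- The Dirac frequency `ωₙ* = (2n+1)π/(2L)`. -/
noncomputable def ωstar (n : ℕ) : ℝ := (2 * n + 1) * π / (2 * L)

/-- `g_β(ω) = (9·cos²(ωL) − 3 − 2·cos(2πβ)) / √(2 + 2·cos(2πβ))`. -/
noncomputable def g (β ω : ℝ) : ℝ :=
  (9 * Real.cos (ω * L) ^ 2 - 3 - 2 * Real.cos (2 * π * β)) /
    Real.sqrt (2 + 2 * Real.cos (2 * π * β))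

/-- `a(β) = arccos(√(3 + 2·cos(2πβ) − 2·√(2 + 2·cos(2πβ)))/3)`. -/
noncomputable def aβ (β : ℝ) : ℝ :=
  Real.arccos (Real.sqrt (3 + 2 * Real.cos (2 * π * β) -
    2 * Real.sqrt (2 + 2 * Real.cos (2 * π * β))) / 3)

/-- The open interval `Ĩⁿ(β) = (nπ/L + a(β)/L, (n+1)π/L − a(β)/L)`. -/
noncomputable def Itilde (β : ℝ) (n : ℕ) : Set ℝ :=
  Set.Ioo (n * π / L + aβ β / L) ((n + 1) * π / L - aβ β / L)

/-- `r_β(ω) = (g_β(ω) + √(g_β(ω)² − 4))/2`. -/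
noncomputable def r (β ω : ℝ) : ℝ := (g β ω + Real.sqrt (g β ω ^ 2 - 4)) / 2

/-- `u₀ = 1 + r_β(ω)·√(2 + 2·cos(2πβ))`. -/
noncomputable def u₀ (β ω : ℝ) : ℝ :=
  1 + r β ω * Real.sqrt (2 + 2 * Real.cos (2 * π * β))

/-- `v₀ = 3·cos(ωL)`. -/
noncomputable def v₀ (ω : ℝ) : ℝ := 3 * Real.cos (ω * L)

/-- `v₀' = (ω/sin(ωL))·(u₀ − v₀·cos(ωL))`. -/
noncomputable def v₀' (β ω : ℝ) : ℝ :=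
  (ω / Real.sin (ω * L)) * (u₀ β ω - v₀ ω * Real.cos (ω * L))

lemma indexA (θ T : ℝ) (n : ℕ) (hθ1 : -(π/2) < θ) (hθ2 : θ < π/2)
    (h1 : θ + n*π < T) (h2 : T < θ + ((n:ℝ)+1)*π) :
    {k : ℤ | 0 < θ + k*π ∧ θ + k*π ≤ T} = Set.Icc (if 0 < θ then 0 else 1) (n:ℤ) := by
  have hπ := Real.pi_pos
  ext k
  simp only [Set.mem_setOf_eq, Set.mem_Icc]
  constructor
  · rintro ⟨hk1, hk2⟩
    have hkn : k ≤ (n:ℤ) := by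
      by_contra h
      push_neg at h
      have hk : ((n:ℝ)+1) ≤ (k:ℝ) := by exact_mod_cast h
      have : ((n:ℝ)+1)*π ≤ (k:ℝ)*π := mul_le_mul_of_nonneg_right hk hπ.le
      linarith
    refine ⟨?_, hkn⟩
    split_ifs with hθ
    · by_contra h
      push_neg at h
      have hk' : k ≤ -1 := by omega
      have hk : (k:ℝ) ≤ -1 := by exact_mod_cast hk'
      have : (k:ℝ)*π ≤ (-1)*π := mul_le_mul_of_nonneg_right hk hπ.le
      linarith
    · push_neg at hθ
      by_contra h
      push_neg at h
      have hk' : k ≤ 0 := by omega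
      have hk : (k:ℝ) ≤ 0 := by exact_mod_cast hk'
      have : (k:ℝ)*π ≤ 0 := mul_nonpos_of_nonpos_of_nonneg hk hπ.le
      linarith
  · rintro ⟨hk1, hk2⟩
    have hkn : (k:ℝ) ≤ (n:ℝ) := by exact_mod_cast hk2
    have hknπ : (k:ℝ)*π ≤ (n:ℝ)*π := mul_le_mul_of_nonneg_right hkn hπ.le
    refine ⟨?_, by linarith⟩
    split_ifs at hk1 with hθ
    · have h0 : (0:ℝ) ≤ (k:ℝ) := by exact_mod_cast hk1
      have : 0 ≤ (k:ℝ)*π := mul_nonneg h0 hπ.le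
      linarith
    · have h1' : (1:ℝ) ≤ (k:ℝ) := by exact_mod_cast hk1
      have : 1*π ≤ (k:ℝ)*π := mul_le_mul_of_nonneg_right h1' hπ.le
      push_neg at hθ
      linarith

lemma indexB (θ T : ℝ) (n : ℕ) (hθ1 : -(π/2) < θ) (hθ2 : θ < π/2)
    (h1 : θ + n*π < T) (h2 : T < θ + ((n:ℝ)+1)*π) :
    {k : ℤ | 0 ≤ θ + k*π ∧ θ + k*π < T} = Set.Icc (if 0 ≤ θ then 0 else 1) (n:ℤ) := by
  have hπ := Real.pi_pos
  ext k
  simp only [Set.mem_setOf_eq, Set.mem_Icc]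
  constructor
  · rintro ⟨hk1, hk2⟩
    have hkn : k ≤ (n:ℤ) := by
      by_contra h
      push_neg at h
      have hk : ((n:ℝ)+1) ≤ (k:ℝ) := by exact_mod_cast h
      have : ((n:ℝ)+1)*π ≤ (k:ℝ)*π := mul_le_mul_of_nonneg_right hk hπ.le
      linarith
    refine ⟨?_, hkn⟩
    split_ifs with hθ
    · by_contra h
      push_neg at h
      have hk' : k ≤ -1 := by omega
      have hk : (k:ℝ) ≤ -1 := by exact_mod_cast hk'
      have : (k:ℝ)*π ≤ (-1)*π := mul_le_mul_of_nonneg_right hk hπ.le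
      linarith
    · push_neg at hθ
      by_contra h
      push_neg at h
      have hk' : k ≤ 0 := by omega
      have hk : (k:ℝ) ≤ 0 := by exact_mod_cast hk'
      have : (k:ℝ)*π ≤ 0 := mul_nonpos_of_nonpos_of_nonneg hk hπ.le
      linarith
  · rintro ⟨hk1, hk2⟩
    have hkn : (k:ℝ) ≤ (n:ℝ) := by exact_mod_cast hk2
    have hknπ : (k:ℝ)*π ≤ (n:ℝ)*π := mul_le_mul_of_nonneg_right hkn hπ.le
    refine ⟨?_, by linarith⟩
    split_ifs at hk1 with hθ
    · have h0 : (0:ℝ) ≤ (k:ℝ) := by exact_mod_cast hk1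
      have : 0 ≤ (k:ℝ)*π := mul_nonneg h0 hπ.le
      linarith
    · have h1' : (1:ℝ) ≤ (k:ℝ) := by exact_mod_cast hk1
      have : 1*π ≤ (k:ℝ)*π := mul_le_mul_of_nonneg_right h1' hπ.le
      push_neg at hθ
      linarith


set_option maxHeartbeats 2000000 in
theorem stmt_19 (β : ℝ) (hβ0 : 0 < β) (hβ1 : β < 1 / 2) (hβ3 : β ≠ 1 / 3) (n : ℕ)
    (ω : ℝ) (hω : ω ∈ Itilde β n) (hωne : ω ≠ ωstar n) :
    ({t ∈ Set.Ico (0 : ℝ) L |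
        v₀ ω * ω * Real.sin (ω * (L - t)) + (v₀' β ω / 2) * Real.cos (ω * (L - t)) = 0} ∪
      {t ∈ Set.Ico L (2 * L) |
        -(v₀ ω * Real.cos (ω * (2 * L - t))) + u₀ β ω * Real.cos (ω * (t - L)) = 0}).ncard =
      2 * n + 1 := by
  have hπ := Real.pi_pos
  have hL : 0 < L := by unfold L; positivity
  obtain ⟨c, hc⟩ : ∃ x, x = Real.cos (2 * π * β) := ⟨_, rfl⟩
  have h2πβ_pos : 0 < 2 * π * β := by positivity
  have h2πβ_lt : 2 * π * β < π := by clear * - hπ hβ0 hβ1; nlinarith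
  have hc1 : c < 1 := by
    have h := Real.cos_lt_cos_of_nonneg_of_le_pi (le_refl 0) h2πβ_lt.le h2πβ_pos
    rw [Real.cos_zero] at h; rw [hc]; exact h
  have hcm1 : -1 < c := by
    have h := Real.cos_lt_cos_of_nonneg_of_le_pi h2πβ_pos.le (le_refl π) h2πβ_lt
    rw [Real.cos_pi] at h; rw [hc]; exact h
  have hS : (0:ℝ) < 2 + 2*c := by linarith
  obtain ⟨σ, hσ⟩ : ∃ x, x = Real.sqrt (2 + 2*c) := ⟨_, rfl⟩
  have hσ_pos : 0 < σ := hσ ▸ Real.sqrt_pos.mpr hS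
  have hσ_sq : σ^2 = 2 + 2*c := hσ ▸ Real.sq_sqrt hS.le
  have hσ_lt2 : σ < 2 := by clear * - hσ_sq hc1 hσ_pos; nlinarith [sq_nonneg (σ - 2)]
  have habs : |σ - 1| < 1 := abs_lt.mpr ⟨by linarith, by linarith⟩
  -- a = aβ β
  have harg : 3 + 2*c - 2*σ = (σ-1)^2 := by linear_combination -hσ_sq
  have haval : aβ β = Real.arccos (|σ - 1| / 3) := by
    unfold aβ
    rw [← hc, ← hσ, harg, Real.sqrt_sq_eq_abs]
  have hcos_a : Real.cos (aβ β) = |σ - 1| / 3 := by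
    rw [haval]
    exact Real.cos_arccos (by clear * - habs; nlinarith [abs_nonneg (σ-1)]) (by clear * - habs; nlinarith [abs_nonneg (σ-1)])
  have ha_pos : 0 < aβ β := by
    rw [haval]; exact Real.arccos_pos.mpr (by clear * - habs; nlinarith [abs_nonneg (σ-1)])
  have ha_le : aβ β ≤ π/2 := by
    rw [haval]; exact Real.arccos_le_pi_div_two.mpr (by positivity)
  -- T bounds
  obtain ⟨hω1, hω2⟩ := hω
  have hT1 : (n:ℝ)*π + aβ β < ω * L := by
    have h := mul_lt_mul_of_pos_right hω1 hL
    rw [add_mul, div_mul_cancel₀ _ hL.ne', div_mul_cancel₀ _ hL.ne'] at h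
    exact h
  have hT2 : ω * L < ((n:ℝ)+1)*π - aβ β := by
    have h := mul_lt_mul_of_pos_right hω2 hL
    rw [sub_mul, div_mul_cancel₀ _ hL.ne', div_mul_cancel₀ _ hL.ne'] at h
    exact h
  have hωL_pos : 0 < ω * L := by
    have : (0:ℝ) ≤ (n:ℝ)*π := by positivity
    linarith
  have hω_pos : 0 < ω := by
    rcases mul_pos_iff.mp hωL_pos with ⟨h, _⟩ | ⟨_, h⟩
    · exact h
    · linarith
  -- x₀
  obtain ⟨x₀, hx₀def⟩ : ∃ x, x = ω * L - n * π := ⟨_, rfl⟩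
  have hx₀1 : aβ β < x₀ := by rw [hx₀def]; linarith
  have hx₀2 : x₀ < π - aβ β := by rw [hx₀def]; linarith
  have hx₀_pos : 0 < x₀ := by linarith
  have hx₀_ltπ : x₀ < π := by linarith
  obtain ⟨s₀, hs₀def⟩ : ∃ x, x = Real.sin x₀ := ⟨_, rfl⟩
  obtain ⟨c₀, hc₀def⟩ : ∃ x, x = Real.cos x₀ := ⟨_, rfl⟩
  have hs₀_pos : 0 < s₀ := hs₀def ▸ Real.sin_pos_of_pos_of_lt_pi hx₀_pos hx₀_ltπ
  have hc₀_ub : c₀ < |σ-1|/3 := by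
    rw [← hcos_a, hc₀def]
    exact Real.cos_lt_cos_of_nonneg_of_le_pi (Real.arccos_nonneg _) hx₀_ltπ.le hx₀1
  have hc₀_lb : -(|σ-1|/3) < c₀ := by
    rw [← hcos_a, ← Real.cos_pi_sub, hc₀def]
    exact Real.cos_lt_cos_of_nonneg_of_le_pi hx₀_pos.le (by linarith) hx₀2
  have habs2 : (σ-1)^2 < 1 := by
    rw [← sq_abs]
    exact pow_lt_one₀ (abs_nonneg _) habs (by norm_num)
  have hC : 9 * c₀^2 < (σ-1)^2 := by
    have h1 : c₀^2 < (|σ-1|/3)^2 := sq_lt_sq' hc₀_lb hc₀_ub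
    calc 9 * c₀^2 < 9 * (|σ-1|/3)^2 := by linarith
    _ = |σ-1|^2 := by ring
    _ = (σ-1)^2 := sq_abs _
  have h9 : 9 * c₀^2 < 1 := by linarith
  have hpyth : s₀^2 + c₀^2 = 1 := by rw [hs₀def, hc₀def]; exact Real.sin_sq_add_cos_sq x₀
  -- trig transfer
  have hωLx : ω * L = x₀ + n * π := by rw [hx₀def]; ring
  have hsinT : Real.sin (ω*L) = (-1:ℝ)^n * s₀ := by rw [hωLx, hs₀def]; exact Real.sin_add_nat_mul_pi x₀ n
  have hcosT : Real.cos (ω*L) = (-1:ℝ)^n * c₀ := by rw [hωLx, hc₀def]; exact Real.cos_add_nat_mul_pi x₀ n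
  have hsinT_ne : Real.sin (ω*L) ≠ 0 := by
    rw [hsinT]
    rcases Nat.even_or_odd n with he | ho
    · rw [he.neg_one_pow]; simpa using hs₀_pos.ne'
    · rw [ho.neg_one_pow]; simp; exact hs₀_pos.ne'
  have hc₀_ne : c₀ ≠ 0 := by
    intro h0
    apply hωne
    have : x₀ = π/2 := by
      rcases Real.cos_eq_zero_iff.mp (by rw [← hc₀def]; exact h0) with ⟨k, hk⟩
      have hk0 : k = 0 := by
        by_contra hkne
        rcases lt_or_gt_of_ne hkne with hlt | hgt
        · have h2' : k ≤ -1 := by omega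
          have h2 : (k:ℝ) ≤ -1 := by exact_mod_cast h2'
          clear * - h2 hk hπ hx₀_pos; nlinarith
        · have h2' : (1:ℤ) ≤ k := by omega
          have h2 : (1:ℝ) ≤ (k:ℝ) := by exact_mod_cast h2'
          clear * - h2 hk hπ hx₀_ltπ; nlinarith
      rw [hk0] at hk; push_cast at hk; linarith
    unfold ωstar
    rw [eq_div_iff (by positivity)]
    have : ω * L = n * π + π/2 := by rw [hωLx, this]; ring
    push_cast
    clear * - this; nlinarith [this]
  have hcosT_ne : Real.cos (ω*L) ≠ 0 := by
    rw [hcosT]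
    rcases Nat.even_or_odd n with he | ho
    · rw [he.neg_one_pow]; simpa using hc₀_ne
    · rw [ho.neg_one_pow]; simp; exact hc₀_ne
  -- g, r, u₀
  have hgσ : g β ω * σ = 9*c₀^2 - 1 - σ^2 := by
    unfold g
    rw [← hc, ← hσ, hcosT, div_mul_cancel₀ _ hσ_pos.ne']
    have hε2 : ((-1:ℝ)^n)^2 = 1 := by
      rcases Nat.even_or_odd n with he | ho
      · rw [he.neg_one_pow]; norm_num
      · rw [ho.neg_one_pow]; norm_num
    linear_combination (9*c₀^2) * hε2 + hσ_sq
  have hg_lt : g β ω < -2 := by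
    have h1 : g β ω * σ < (-2) * σ := by clear * - hgσ hC; nlinarith [hgσ, hC]
    exact lt_of_mul_lt_mul_right h1 hσ_pos.le
  have hdisc : 0 < g β ω ^ 2 - 4 := by
    have h := mul_pos (show (0:ℝ) < -g β ω - 2 by linarith) (show (0:ℝ) < -g β ω + 2 by linarith)
    clear * - h; nlinarith [h]
  have hr_neg : r β ω < 0 := by
    unfold r
    have h1 : Real.sqrt (g β ω ^ 2 - 4) < -(g β ω) := by
      rw [Real.sqrt_lt' (by linarith)]
      clear * - hg_lt; nlinarith
    linarith
  have hr_gt : -1 < r β ω := by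
    unfold r
    have h1 : -2 - g β ω < Real.sqrt (g β ω ^ 2 - 4) := by
      rw [show -2 - g β ω = (-2 - g β ω) from rfl]
      have := (Real.lt_sqrt (by linarith : (0:ℝ) ≤ -2 - g β ω)).mpr (by clear * - hg_lt; nlinarith : (-2 - g β ω)^2 < g β ω ^ 2 - 4)
      exact this
    linarith
  have hu₀def : u₀ β ω = 1 + r β ω * σ := by unfold u₀; rw [← hc, ← hσ]
  have hu₀_lt : u₀ β ω < 1 := by
    rw [hu₀def]
    clear * - hr_neg hσ_pos; nlinarith [mul_neg_of_neg_of_pos hr_neg hσ_pos]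
  have hu₀_gt : -1 < u₀ β ω := by
    rw [hu₀def]
    clear * - hr_gt hσ_pos hσ_lt2; nlinarith [mul_lt_mul_of_pos_right hr_gt hσ_pos]
  have hu3 : u₀ β ω < 3 := by linarith
  -- ε² = 1
  have hε2 : ((-1:ℝ)^n)^2 = 1 := by
    rcases Nat.even_or_odd n with he | ho
    · rw [he.neg_one_pow]; norm_num
    · rw [ho.neg_one_pow]; norm_num
  -- m
  have hω_ne : ω ≠ 0 := hω_pos.ne'
  have hv₀eq : v₀ ω = 3*((-1:ℝ)^n * c₀) := by unfold v₀; rw [hcosT]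
  have hv₀_ne : v₀ ω ≠ 0 := by
    rw [hv₀eq]
    rcases Nat.even_or_odd n with he | ho
    · rw [he.neg_one_pow]; simp; exact hc₀_ne
    · rw [ho.neg_one_pow]; simp; exact hc₀_ne
  obtain ⟨m, hmdef⟩ : ∃ x, x = v₀' β ω / (v₀ ω * ω) := ⟨_, rfl⟩
  have hv₀'m : v₀' β ω = m * (v₀ ω * ω) := by
    rw [hmdef]; field_simp
  have hA1 : v₀' β ω * Real.sin (ω*L) = ω * (u₀ β ω - v₀ ω * Real.cos (ω*L)) := by
    unfold v₀'; field_simp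
  have hm : m * (3*s₀*c₀) = u₀ β ω - 3*c₀^2 := by
    apply mul_right_cancel₀ hω_ne
    rw [hv₀'m, hsinT, hcosT, hv₀eq] at hA1
    clear * - hA1 hε2
    linear_combination hA1 - (3*m*ω*s₀*c₀ + 3*ω*c₀^2) * hε2
  -- core inequalities
  have core1 : m * c₀ < s₀ := by
    have h5 : (m*c₀)*(3*s₀) < s₀*(3*s₀) := by
      clear * - hm hpyth hu₀_lt hs₀_pos; nlinarith [hm, hpyth, hu₀_lt]
    exact lt_of_mul_lt_mul_right h5 (by positivity)
  have core2 : (-(m/2))*c₀ < s₀ := by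
    have h5 : ((-(m/2))*c₀)*(6*s₀) < s₀*(6*s₀) := by
      clear * - hm hpyth hu₀_gt h9 hs₀_pos; nlinarith [hm, hpyth, hu₀_gt, h9]
    exact lt_of_mul_lt_mul_right h5 (by positivity)
  -- θA, θB
  obtain ⟨θA, hθAdef⟩ : ∃ x, x = Real.arctan (-(m/2)) := ⟨_, rfl⟩
  obtain ⟨θB, hθBdef⟩ : ∃ x, x = Real.arctan m := ⟨_, rfl⟩
  have hθA1 : -(π/2) < θA := hθAdef ▸ Real.neg_pi_div_two_lt_arctan _
  have hθA2 : θA < π/2 := hθAdef ▸ Real.arctan_lt_pi_div_two _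
  have hθB1 : -(π/2) < θB := hθBdef ▸ Real.neg_pi_div_two_lt_arctan _
  have hθB2 : θB < π/2 := hθBdef ▸ Real.arctan_lt_pi_div_two _
  have hθx : (θA < x₀ ∧ x₀ - π < θA) ∧ (θB < x₀ ∧ x₀ - π < θB) := by
    rcases lt_or_gt_of_ne hc₀_ne with hc₀neg | hc₀pos
    · have hx₀half : π/2 < x₀ := by
        by_contra h
        push_neg at h
        have h2 : 0 ≤ Real.cos x₀ := Real.cos_nonneg_of_mem_Icc ⟨by linarith, h⟩
        rw [← hc₀def] at h2; linarith
      have htan : Real.tan (x₀ - π) = s₀ / c₀ := by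
        rw [Real.tan_periodic.sub_eq, Real.tan_eq_sin_div_cos, ← hs₀def, ← hc₀def]
      have harct : Real.arctan (s₀/c₀) = x₀ - π := by
        rw [← htan]; exact Real.arctan_tan (by linarith) (by linarith)
      refine ⟨⟨by linarith, ?_⟩, ⟨by linarith, ?_⟩⟩
      · have hcmp : s₀ / c₀ < -(m/2) := (div_lt_iff_of_neg hc₀neg).mpr core2
        have := Real.arctan_strictMono hcmp
        rw [harct, ← hθAdef] at this; linarith
      · have hcmp : s₀ / c₀ < m := (div_lt_iff_of_neg hc₀neg).mpr core1
        have := Real.arctan_strictMono hcmp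
        rw [harct, ← hθBdef] at this; linarith
    · have hx₀half : x₀ < π/2 := by
        by_contra h
        push_neg at h
        have h2 : Real.cos x₀ ≤ 0 := Real.cos_nonpos_of_pi_div_two_le_of_le h (by linarith)
        rw [← hc₀def] at h2; linarith
      have htan : Real.tan x₀ = s₀ / c₀ := by
        rw [Real.tan_eq_sin_div_cos, ← hs₀def, ← hc₀def]
      have harct : Real.arctan (s₀/c₀) = x₀ := by
        rw [← htan]; exact Real.arctan_tan (by linarith) hx₀half
      refine ⟨⟨?_, by linarith⟩, ⟨?_, by linarith⟩⟩
      · have hcmp : -(m/2) < s₀ / c₀ := (lt_div_iff₀ hc₀pos).mpr core2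
        have := Real.arctan_strictMono hcmp
        rw [harct, ← hθAdef] at this; linarith
      · have hcmp : m < s₀ / c₀ := (lt_div_iff₀ hc₀pos).mpr core1
        have := Real.arctan_strictMono hcmp
        rw [harct, ← hθBdef] at this; linarith
  obtain ⟨⟨hθAx1, hθAx2⟩, ⟨hθBx1, hθBx2⟩⟩ := hθx
  have h1A : θA + (n:ℝ)*π < ω*L := by rw [hx₀def] at hθAx1; linarith
  have h2A : ω*L < θA + ((n:ℝ)+1)*π := by rw [hx₀def] at hθAx2; linarith
  have h1B : θB + (n:ℝ)*π < ω*L := by rw [hx₀def] at hθBx1; linarith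
  have h2B : ω*L < θB + ((n:ℝ)+1)*π := by rw [hx₀def] at hθBx2; linarith
  -- equation equivalences
  have hcθA : 0 < Real.cos θA := by rw [hθAdef]; exact Real.cos_arctan_pos _
  have hcθB : 0 < Real.cos θB := by rw [hθBdef]; exact Real.cos_arctan_pos _
  have hsθA : Real.sin θA = -(m/2) * Real.cos θA := by
    rw [hθAdef, Real.sin_arctan, Real.cos_arctan]; ring
  have hsθB : Real.sin θB = m * Real.cos θB := by
    rw [hθBdef, Real.sin_arctan, Real.cos_arctan]; ring
  have hexpA : ∀ x:ℝ, Real.sin (x - θA) = Real.cos θA * (Real.sin x + m/2 * Real.cos x) := by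
    intro x; rw [Real.sin_sub, hsθA]; ring
  have hexpB : ∀ x:ℝ, Real.sin (x - θB) = Real.cos θB * (Real.sin x - m * Real.cos x) := by
    intro x; rw [Real.sin_sub, hsθB]; ring
  have hiffA : ∀ x:ℝ, (v₀ ω * ω * Real.sin x + v₀' β ω / 2 * Real.cos x = 0) ↔
      Real.sin (x - θA) = 0 := by
    intro x
    rw [hexpA x]
    constructor
    · intro h
      have h' : (v₀ ω * ω) * (Real.sin x + m/2 * Real.cos x) = 0 := by
        rw [hv₀'m] at h; linear_combination h
      rcases mul_eq_zero.mp h' with h'' | h''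
      · exact absurd h'' (mul_ne_zero hv₀_ne hω_ne)
      · rw [h'', mul_zero]
    · intro h
      rcases mul_eq_zero.mp h with h'' | h''
      · exact absurd h'' hcθA.ne'
      · rw [hv₀'m]; linear_combination (v₀ ω * ω) * h''
  have hu₀exp : u₀ β ω = v₀ ω * Real.cos (ω*L) + m * (v₀ ω * Real.sin (ω*L)) := by
    have hA1' : v₀' β ω * Real.sin (ω*L) = ω * (u₀ β ω - v₀ ω * Real.cos (ω*L)) := by
      unfold v₀'; field_simp
    rw [hv₀'m] at hA1'
    have h6 := mul_left_cancel₀ hω_ne (show ω * (m*(v₀ ω * Real.sin (ω*L))) =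
      ω * (u₀ β ω - v₀ ω * Real.cos (ω*L)) from by linear_combination hA1')
    linarith
  have hBid : ∀ x:ℝ, -(v₀ ω * Real.cos (ω*L - x)) + u₀ β ω * Real.cos x =
      (v₀ ω * Real.sin (ω*L)) * (m * Real.cos x - Real.sin x) := by
    intro x
    rw [Real.cos_sub, hu₀exp]; ring
  have hvs_ne : v₀ ω * Real.sin (ω*L) ≠ 0 := mul_ne_zero hv₀_ne hsinT_ne
  have hiffB : ∀ x:ℝ, (-(v₀ ω * Real.cos (ω*L - x)) + u₀ β ω * Real.cos x = 0) ↔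
      Real.sin (x - θB) = 0 := by
    intro x
    rw [hBid x, hexpB x]
    constructor
    · intro h
      rcases mul_eq_zero.mp h with h'' | h''
      · exact absurd h'' hvs_ne
      · rw [show Real.sin x - m * Real.cos x = 0 from by linarith, mul_zero]
    · intro h
      rcases mul_eq_zero.mp h with h'' | h''
      · exact absurd h'' hcθB.ne'
      · rw [show m * Real.cos x - Real.sin x = 0 from by linarith, mul_zero]
  -- index set characterizations
  have hIA := indexA θA (ω*L) n hθA1 hθA2 h1A h2A
  have hIB := indexB θB (ω*L) n hθB1 hθB2 h1B h2B
  have hSAeq : {t ∈ Set.Ico (0:ℝ) L |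
        v₀ ω * ω * Real.sin (ω * (L - t)) + (v₀' β ω / 2) * Real.cos (ω * (L - t)) = 0} =
      (fun k : ℤ => L - (θA + (k:ℝ)*π)/ω) '' (Set.Icc (if 0 < θA then 0 else 1) (n:ℤ)) := by
    rw [← hIA]
    ext t
    simp only [Set.mem_sep_iff, Set.mem_Ico, Set.mem_image, Set.mem_setOf_eq]
    constructor
    · rintro ⟨⟨ht0, htL⟩, heq⟩
      rcases Real.sin_eq_zero_iff.mp ((hiffA (ω*(L-t))).mp heq) with ⟨k, hk⟩
      have hx : θA + (k:ℝ)*π = ω*(L-t) := by linarith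
      refine ⟨k, ⟨?_, ?_⟩, ?_⟩
      · rw [hx]; exact mul_pos hω_pos (by linarith)
      · rw [hx]
        have := mul_le_mul_of_nonneg_left (show L - t ≤ L by linarith) hω_pos.le
        linarith
      · rw [hx]
        field_simp
        ring
    · rintro ⟨k, ⟨hk1, hk2⟩, rfl⟩
      have hdiv1 : (θA + (k:ℝ)*π)/ω ≤ L := by
        rw [div_le_iff₀ hω_pos]; linarith
      have hdiv2 : 0 < (θA + (k:ℝ)*π)/ω := div_pos hk1 hω_pos
      refine ⟨⟨by linarith, by linarith⟩, ?_⟩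
      apply (hiffA _).mpr
      rw [show ω * (L - (L - (θA + (k:ℝ)*π)/ω)) = θA + (k:ℝ)*π by field_simp; ring,
        show θA + (k:ℝ)*π - θA = (k:ℝ)*π by ring]
      exact Real.sin_int_mul_pi k
  have hSBeq : {t ∈ Set.Ico L (2*L) |
        -(v₀ ω * Real.cos (ω * (2*L - t))) + u₀ β ω * Real.cos (ω * (t - L)) = 0} =
      (fun k : ℤ => L + (θB + (k:ℝ)*π)/ω) '' (Set.Icc (if 0 ≤ θB then 0 else 1) (n:ℤ)) := by
    rw [← hIB]
    ext t
    simp only [Set.mem_sep_iff, Set.mem_Ico, Set.mem_image, Set.mem_setOf_eq]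
    constructor
    · rintro ⟨⟨htL, ht2L⟩, heq⟩
      rw [show ω * (2*L - t) = ω*L - ω*(t - L) by ring] at heq
      rcases Real.sin_eq_zero_iff.mp ((hiffB (ω*(t-L))).mp heq) with ⟨k, hk⟩
      have hx : θB + (k:ℝ)*π = ω*(t-L) := by linarith
      refine ⟨k, ⟨?_, ?_⟩, ?_⟩
      · rw [hx]; exact mul_nonneg hω_pos.le (by linarith)
      · rw [hx]
        have := mul_lt_mul_of_pos_left (show t - L < L by linarith) hω_pos
        linarith
      · rw [hx]
        field_simp
        ring
    · rintro ⟨k, ⟨hk1, hk2⟩, rfl⟩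
      have hdiv1 : (θB + (k:ℝ)*π)/ω < L := by
        rw [div_lt_iff₀ hω_pos]; linarith
      have hdiv2 : 0 ≤ (θB + (k:ℝ)*π)/ω := div_nonneg hk1 hω_pos.le
      refine ⟨⟨by linarith, by linarith⟩, ?_⟩
      have hrw1 : ω * (2*L - (L + (θB + (k:ℝ)*π)/ω)) = ω*L - (θB + (k:ℝ)*π) := by
        field_simp
        ring
      have hrw2 : ω * (L + (θB + (k:ℝ)*π)/ω - L) = θB + (k:ℝ)*π := by
        field_simp
        ring
      rw [hrw1, hrw2]
      apply (hiffB _).mpr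
      rw [show θB + (k:ℝ)*π - θB = (k:ℝ)*π by ring]
      exact Real.sin_int_mul_pi k
  -- injectivity
  have hinjA : Function.Injective (fun k : ℤ => L - (θA + (k:ℝ)*π)/ω) := by
    intro a b hab
    simp only at hab
    have h1 : (θA + (a:ℝ)*π)/ω = (θA + (b:ℝ)*π)/ω := by linarith
    have h2 : θA + (a:ℝ)*π = θA + (b:ℝ)*π := by
      have h3 := congrArg (fun y => y * ω) h1
      simpa [div_mul_cancel₀ _ hω_ne] using h3
    have h4 : (a:ℝ) = b := mul_right_cancel₀ Real.pi_ne_zero (by linarith)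
    exact_mod_cast h4
  have hinjB : Function.Injective (fun k : ℤ => L + (θB + (k:ℝ)*π)/ω) := by
    intro a b hab
    simp only at hab
    have h1 : (θB + (a:ℝ)*π)/ω = (θB + (b:ℝ)*π)/ω := by linarith
    have h2 : θB + (a:ℝ)*π = θB + (b:ℝ)*π := by
      have h3 := congrArg (fun y => y * ω) h1
      simpa [div_mul_cancel₀ _ hω_ne] using h3
    have h4 : (a:ℝ) = b := mul_right_cancel₀ Real.pi_ne_zero (by linarith)
    exact_mod_cast h4
  -- disjointness
  have hdisj : Disjoint
      ((fun k : ℤ => L - (θA + (k:ℝ)*π)/ω) '' (Set.Icc (if 0 < θA then 0 else 1) (n:ℤ)))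
      ((fun k : ℤ => L + (θB + (k:ℝ)*π)/ω) '' (Set.Icc (if 0 ≤ θB then 0 else 1) (n:ℤ))) := by
    rw [Set.disjoint_left]
    rintro t ⟨k, hk, rfl⟩ ⟨k', hk', ht⟩
    rw [← hIA] at hk
    rw [← hIB] at hk'
    simp only [Set.mem_setOf_eq] at hk hk'
    have hp1 : 0 < (θA + (k:ℝ)*π)/ω := div_pos hk.1 hω_pos
    have hp2 : 0 ≤ (θB + (k':ℝ)*π)/ω := div_nonneg hk'.1 hω_pos.le
    simp only at ht
    linarith
  -- count
  rw [hSAeq, hSBeq,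
    Set.ncard_union_eq hdisj ((Set.finite_Icc _ _).image _) ((Set.finite_Icc _ _).image _),
    Set.ncard_image_of_injective _ hinjA, Set.ncard_image_of_injective _ hinjB,
    ← Finset.coe_Icc, ← Finset.coe_Icc, Set.ncard_coe_finset, Set.ncard_coe_finset,
    Int.card_Icc, Int.card_Icc]
  have harctan_pos : ∀ y:ℝ, 0 < Real.arctan y ↔ 0 < y := by
    intro y
    constructor
    · intro h
      by_contra h'
      push_neg at h'
      have h2 := Real.arctan_strictMono.monotone h'
      rw [Real.arctan_zero] at h2
      linarith
    · intro h
      have h2 := Real.arctan_strictMono h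
      rw [Real.arctan_zero] at h2
      exact h2
  have harctan_nonneg : ∀ y:ℝ, 0 ≤ Real.arctan y ↔ 0 ≤ y := by
    intro y
    constructor
    · intro h
      by_contra h'
      push_neg at h'
      have h2 := Real.arctan_strictMono h'
      rw [Real.arctan_zero] at h2
      linarith
    · intro h
      have h2 := Real.arctan_strictMono.monotone h
      rw [Real.arctan_zero] at h2
      exact h2
  have hθApos : (0 < θA) ↔ (0 < -(m/2)) := by rw [hθAdef]; exact harctan_pos _
  have hθBnn : (0 ≤ θB) ↔ (0 ≤ m) := by rw [hθBdef]; exact harctan_nonneg _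
  rcases lt_or_ge m 0 with hm0 | hm0
  · rw [if_pos (hθApos.mpr (by linarith)),
      if_neg (fun h => absurd (hθBnn.mp h) (not_le.mpr hm0))]
    omega
  · rw [if_neg (fun h => absurd (hθApos.mp h) (by simp; linarith)),
      if_pos (hθBnn.mpr hm0)]
    omega
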